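/- Let λ > 0, X ∈ ℝ^{n×D}, θ* ∈ ℝ^D, η ∈ ℝ^n, define V_λ = XᵀX + λI_D and θ̂ = V_λ^{-1}Xᵀ(Xθ* + η). Let P be a probability measure on ℝ^D with ∫‖x‖₂² dP(x) < ∞ and Σ_P = ∫ x xᵀ dP(x). Then ∫ |xᵀ(θ̂ − θ*)| dP(x) ≤ √(Tr(V_λ^{-1} Σ_P)) · ( ‖Xᵀη‖_{V_λ^{-1}} + √λ·‖θ*‖₂ ), where for a positive definite matrix M, ‖v‖_M := √(vᵀMv). -/

import Mathlib

open Matrix MeasureTheory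

section Aux

lemma dotSelf_nonneg {m : ℕ} (v : Fin m → ℝ) : 0 ≤ v ⬝ᵥ v :=
  Finset.sum_nonneg fun i _ => mul_self_nonneg _

lemma dotSelf_pos {m : ℕ} {v : Fin m → ℝ} (hv : v ≠ 0) : 0 < v ⬝ᵥ v := by
  obtain ⟨i, hi⟩ := Function.ne_iff.mp hv
  exact Finset.sum_pos' (fun j _ => mul_self_nonneg _)
    ⟨i, Finset.mem_univ i, mul_self_pos.mpr hi⟩

lemma symm_dot {D : ℕ} {M : Matrix (Fin D) (Fin D) ℝ} (hM : Mᵀ = M) (u v : Fin D → ℝ) :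
    u ⬝ᵥ M *ᵥ v = v ⬝ᵥ M *ᵥ u := by
  nth_rewrite 1 [← hM]
  rw [Matrix.mulVec_transpose, dotProduct_comm, ← Matrix.dotProduct_mulVec]

lemma psd_transpose_eq {D : ℕ} {M : Matrix (Fin D) (Fin D) ℝ} (hM : M.PosSemidef) :
    Mᵀ = M := by
  have := hM.1
  rwa [← Matrix.conjTranspose_eq_transpose_of_trivial]

lemma psd_nonneg {D : ℕ} {M : Matrix (Fin D) (Fin D) ℝ} (hM : M.PosSemidef)
    (v : Fin D → ℝ) : 0 ≤ v ⬝ᵥ M *ᵥ v := by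
  simpa using hM.dotProduct_mulVec_nonneg v

lemma psd_cauchy {D : ℕ} {M : Matrix (Fin D) (Fin D) ℝ} (hM : M.PosSemidef)
    (u v : Fin D → ℝ) :
    (u ⬝ᵥ M *ᵥ v) ^ 2 ≤ (u ⬝ᵥ M *ᵥ u) * (v ⬝ᵥ M *ᵥ v) := by
  have hsym := psd_transpose_eq hM
  have key : ∀ t : ℝ, 0 ≤ (v ⬝ᵥ M *ᵥ v) * (t * t) + (2 * (u ⬝ᵥ M *ᵥ v)) * t
      + (u ⬝ᵥ M *ᵥ u) := by
    intro t
    have h0 : 0 ≤ (u + t • v) ⬝ᵥ M *ᵥ (u + t • v) := psd_nonneg hM _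
    have hexp : (u + t • v) ⬝ᵥ M *ᵥ (u + t • v)
        = (u ⬝ᵥ M *ᵥ u) + t * (u ⬝ᵥ M *ᵥ v) + t * (v ⬝ᵥ M *ᵥ u)
          + t * t * (v ⬝ᵥ M *ᵥ v) := by
      simp only [Matrix.mulVec_add, Matrix.mulVec_smul, add_dotProduct,
        dotProduct_add, smul_dotProduct, dotProduct_smul,
        smul_eq_mul]
      ring
    rw [hexp, symm_dot hsym u v] at h0
    rw [symm_dot hsym u v]
    linarith
  have hd := discrim_le_zero key
  rw [discrim] at hd
  nlinarith [hd]

lemma psd_cs_sqrt {D : ℕ} {M : Matrix (Fin D) (Fin D) ℝ} (hM : M.PosSemidef)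
    (u v : Fin D → ℝ) :
    u ⬝ᵥ M *ᵥ v ≤ Real.sqrt (u ⬝ᵥ M *ᵥ u) * Real.sqrt (v ⬝ᵥ M *ᵥ v) := by
  have h1 : u ⬝ᵥ M *ᵥ v ≤ |u ⬝ᵥ M *ᵥ v| := le_abs_self _
  have h2 : |u ⬝ᵥ M *ᵥ v| = Real.sqrt ((u ⬝ᵥ M *ᵥ v) ^ 2) := (Real.sqrt_sq_eq_abs _).symm
  rw [← Real.sqrt_mul (psd_nonneg hM u)]
  exact h1.trans (h2.le.trans (Real.sqrt_le_sqrt (psd_cauchy hM u v)))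

lemma psd_triangle {D : ℕ} {M : Matrix (Fin D) (Fin D) ℝ} (hM : M.PosSemidef)
    (u v : Fin D → ℝ) :
    Real.sqrt ((u + v) ⬝ᵥ M *ᵥ (u + v))
      ≤ Real.sqrt (u ⬝ᵥ M *ᵥ u) + Real.sqrt (v ⬝ᵥ M *ᵥ v) := by
  have hsym := psd_transpose_eq hM
  have hexp : (u + v) ⬝ᵥ M *ᵥ (u + v)
      = (u ⬝ᵥ M *ᵥ u) + (u ⬝ᵥ M *ᵥ v) + (v ⬝ᵥ M *ᵥ u) + (v ⬝ᵥ M *ᵥ v) := by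
    simp only [Matrix.mulVec_add, add_dotProduct, dotProduct_add]
    ring
  have hs := symm_dot hsym u v
  have hcs := psd_cs_sqrt hM u v
  have hu := psd_nonneg hM u
  have hv := psd_nonneg hM v
  calc Real.sqrt ((u + v) ⬝ᵥ M *ᵥ (u + v))
      ≤ Real.sqrt ((Real.sqrt (u ⬝ᵥ M *ᵥ u) + Real.sqrt (v ⬝ᵥ M *ᵥ v)) ^ 2) := by
        apply Real.sqrt_le_sqrt
        have h1 : Real.sqrt (u ⬝ᵥ M *ᵥ u) ^ 2 = u ⬝ᵥ M *ᵥ u := Real.sq_sqrt hu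
        have h2 : Real.sqrt (v ⬝ᵥ M *ᵥ v) ^ 2 = v ⬝ᵥ M *ᵥ v := Real.sq_sqrt hv
        nlinarith [hcs, hexp, hs]
    _ = _ := Real.sqrt_sq (by positivity)

lemma pd_dot_le {D : ℕ} {M : Matrix (Fin D) (Fin D) ℝ} (hM : M.PosDef)
    (u v : Fin D → ℝ) :
    |u ⬝ᵥ v| ≤ Real.sqrt (u ⬝ᵥ M⁻¹ *ᵥ u) * Real.sqrt (v ⬝ᵥ M *ᵥ v) := by
  have hdet : IsUnit M.det := hM.det_pos.ne'.isUnit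
  have hinv : M⁻¹.PosSemidef := hM.inv.posSemidef
  have h1 : u ⬝ᵥ v = u ⬝ᵥ M⁻¹ *ᵥ (M *ᵥ v) := by
    rw [Matrix.mulVec_mulVec, Matrix.nonsing_inv_mul _ hdet, Matrix.one_mulVec]
  have h2 : (M *ᵥ v) ⬝ᵥ M⁻¹ *ᵥ (M *ᵥ v) = v ⬝ᵥ M *ᵥ v := by
    rw [Matrix.mulVec_mulVec, Matrix.nonsing_inv_mul _ hdet, Matrix.one_mulVec,
      dotProduct_comm]
  have hcs := psd_cauchy hinv u (M *ᵥ v)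
  rw [h2] at hcs
  have : |u ⬝ᵥ v| = Real.sqrt ((u ⬝ᵥ M⁻¹ *ᵥ (M *ᵥ v)) ^ 2) := by
    rw [Real.sqrt_sq_eq_abs, ← h1]
  rw [this, ← Real.sqrt_mul (psd_nonneg hinv u)]
  exact Real.sqrt_le_sqrt hcs

end Aux

/-- **Deterministic skeleton of Lemma 3 (lmm:reg_err).** For `λ > 0`, design
`X ∈ ℝ^{n×D}`, `θ* ∈ ℝ^D`, noise `η ∈ ℝ^n`, `V_λ = XᵀX + λI_D`,
`θ̂ = V_λ⁻¹Xᵀ(Xθ* + η)`, and a probability measure `P` on `ℝ^D` with finite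
second moments and second moment matrix `Σ_P = ∫ xxᵀ dP`:
`∫ |xᵀ(θ̂ − θ*)| dP ≤ √(Tr(V_λ⁻¹Σ_P)) · (‖Xᵀη‖_{V_λ⁻¹} + √λ‖θ*‖₂)`. -/
theorem off_policy_regret_skeleton (n D : ℕ) (l : ℝ) (hl : 0 < l)
    (X : Matrix (Fin n) (Fin D) ℝ) (θstar : Fin D → ℝ) (η : Fin n → ℝ)
    (P : Measure (Fin D → ℝ)) [IsProbabilityMeasure P]
    (hmom : Integrable (fun x => ∑ i, x i ^ 2) P) :
    let Vl : Matrix (Fin D) (Fin D) ℝ := Xᵀ * X + l • 1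
    let θhat : Fin D → ℝ := Vl⁻¹.mulVec (Xᵀ.mulVec (X.mulVec θstar + η))
    let SigP : Matrix (Fin D) (Fin D) ℝ := Matrix.of fun i j => ∫ x, x i * x j ∂P
    (∫ x, |x ⬝ᵥ (θhat - θstar)| ∂P)
      ≤ Real.sqrt ((Vl⁻¹ * SigP).trace)
        * (Real.sqrt ((Xᵀ.mulVec η) ⬝ᵥ Vl⁻¹.mulVec (Xᵀ.mulVec η))
            + Real.sqrt l * Real.sqrt (θstar ⬝ᵥ θstar)) := by
  intro Vl θhat SigP
  -- positive definiteness of Vl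
  have hXX : (Xᵀ * X).PosSemidef := by
    simpa using Matrix.posSemidef_conjTranspose_mul_self X
  have hsm : (l • (1 : Matrix (Fin D) (Fin D) ℝ)).PosDef := by
    refine Matrix.posDef_iff_dotProduct_mulVec.mpr ⟨?_, fun x hx => ?_⟩
    · simp [Matrix.IsHermitian]
    · have : (star x) ⬝ᵥ (l • (1 : Matrix (Fin D) (Fin D) ℝ)) *ᵥ x = l * (x ⬝ᵥ x) := by
        simp [Matrix.smul_mulVec, Matrix.one_mulVec, smul_eq_mul]
      rw [this]
      exact mul_pos hl (dotSelf_pos hx)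
  have hV : Vl.PosDef := by
    have : ((l • (1 : Matrix (Fin D) (Fin D) ℝ)) + Xᵀ * X).PosDef :=
      hsm.add_posSemidef hXX
    show (Xᵀ * X + l • 1).PosDef
    rwa [add_comm]
  have hdet : IsUnit Vl.det := hV.det_pos.ne'.isUnit
  have hVinv : Vl⁻¹.PosSemidef := hV.inv.posSemidef
  -- integrability of coordinate products
  have hint : ∀ i j : Fin D, Integrable (fun x : Fin D → ℝ => x i * x j) P := by
    intro i j
    refine hmom.mono' ?_ (Filter.Eventually.of_forall fun x => ?_)
    · exact ((measurable_pi_apply i).mul (measurable_pi_apply j)).aestronglyMeasurable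
    · have h1 : x i ^ 2 ≤ ∑ k, x k ^ 2 :=
        Finset.single_le_sum (fun k _ => sq_nonneg (x k)) (Finset.mem_univ i)
      have h2 : x j ^ 2 ≤ ∑ k, x k ^ 2 :=
        Finset.single_le_sum (fun k _ => sq_nonneg (x k)) (Finset.mem_univ j)
      have h3 : |x i * x j| ≤ (x i ^ 2 + x j ^ 2) / 2 := by
        rw [abs_mul]
        nlinarith [sq_nonneg (|x i| - |x j|), sq_abs (x i), sq_abs (x j),
          abs_nonneg (x i), abs_nonneg (x j)]
      rw [Real.norm_eq_abs]
      linarith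
  -- the quadratic form q
  have hq_eq : ∀ x : Fin D → ℝ,
      x ⬝ᵥ Vl⁻¹ *ᵥ x = ∑ i, ∑ j, Vl⁻¹ i j * (x i * x j) := by
    intro x
    simp only [dotProduct, Matrix.mulVec, Finset.mul_sum]
    exact Finset.sum_congr rfl fun i _ => Finset.sum_congr rfl fun j _ => by ring
  have hq0 : ∀ x : Fin D → ℝ, 0 ≤ x ⬝ᵥ Vl⁻¹ *ᵥ x := fun x => psd_nonneg hVinv x
  have hq_int : Integrable (fun x : Fin D → ℝ => x ⬝ᵥ Vl⁻¹ *ᵥ x) P := by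
    have : Integrable (fun x : Fin D → ℝ => ∑ i, ∑ j, Vl⁻¹ i j * (x i * x j)) P :=
      integrable_finset_sum _ fun i _ =>
        integrable_finset_sum _ fun j _ => (hint i j).const_mul _
    exact this.congr (Filter.Eventually.of_forall fun x => (hq_eq x).symm)
  -- trace identity
  have htr : ∫ x, (x ⬝ᵥ Vl⁻¹ *ᵥ x) ∂P = (Vl⁻¹ * SigP).trace := by
    have h1 : ∫ x, (x ⬝ᵥ Vl⁻¹ *ᵥ x) ∂P
        = ∑ i, ∑ j, Vl⁻¹ i j * ∫ x, x i * x j ∂P := by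
      simp_rw [hq_eq]
      rw [integral_finset_sum _ fun i _ =>
        integrable_finset_sum _ fun j _ => (hint i j).const_mul (Vl⁻¹ i j)]
      refine Finset.sum_congr rfl fun i _ => ?_
      rw [integral_finset_sum _ fun j _ => (hint i j).const_mul (Vl⁻¹ i j)]
      exact Finset.sum_congr rfl fun j _ => integral_const_mul _ _
    rw [h1]
    simp only [Matrix.trace, Matrix.diag, Matrix.mul_apply, Matrix.of_apply]
    refine Finset.sum_congr rfl fun i _ => Finset.sum_congr rfl fun j _ => ?_
    show Vl⁻¹ i j * ∫ x, x i * x j ∂P = Vl⁻¹ i j * SigP j i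
    have : SigP j i = ∫ x, x i * x j ∂P := by
      show (∫ x, x j * x i ∂P) = ∫ x, x i * x j ∂P
      exact integral_congr_ae (Filter.Eventually.of_forall fun x => mul_comm _ _)
    rw [this]
  have hT0 : 0 ≤ (Vl⁻¹ * SigP).trace := by
    rw [← htr]
    exact integral_nonneg hq0
  -- Jensen : ∫ sqrt(q) ≤ sqrt(∫ q)
  have hsq_meas : AEStronglyMeasurable
      (fun x : Fin D → ℝ => Real.sqrt (x ⬝ᵥ Vl⁻¹ *ᵥ x)) P := by
    have hqm : Measurable (fun x : Fin D → ℝ => x ⬝ᵥ Vl⁻¹ *ᵥ x) := by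
      have : Measurable (fun x : Fin D → ℝ => ∑ i, ∑ j, Vl⁻¹ i j * (x i * x j)) := by
        refine Finset.measurable_sum _ fun i _ => Finset.measurable_sum _ fun j _ => ?_
        exact ((measurable_pi_apply i).mul (measurable_pi_apply j)).const_mul _
      simpa [← hq_eq] using this
    exact (Real.continuous_sqrt.measurable.comp hqm).aestronglyMeasurable
  have hsq_int : Integrable (fun x : Fin D → ℝ => Real.sqrt (x ⬝ᵥ Vl⁻¹ *ᵥ x)) P := by
    refine Integrable.mono' ((hq_int.add (integrable_const 1)).div_const 2) hsq_meas
      (Filter.Eventually.of_forall fun x => ?_)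
    have hq := hq0 x
    have hs := Real.sq_sqrt hq
    have hsn := Real.sqrt_nonneg (x ⬝ᵥ Vl⁻¹ *ᵥ x)
    rw [Real.norm_eq_abs, abs_of_nonneg hsn]
    have : (Real.sqrt (x ⬝ᵥ Vl⁻¹ *ᵥ x) - 1) ^ 2 ≥ 0 := sq_nonneg _
    simp only [Pi.add_apply, Pi.div_apply]
    nlinarith
  have hjen : (∫ x, Real.sqrt (x ⬝ᵥ Vl⁻¹ *ᵥ x) ∂P)
      ≤ Real.sqrt ((Vl⁻¹ * SigP).trace) := by
    set T := (Vl⁻¹ * SigP).trace with hTdef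
    rcases eq_or_lt_of_le hT0 with hT | hT
    · -- T = 0 : q = 0 a.e.
      have hq_zero : (fun x : Fin D → ℝ => x ⬝ᵥ Vl⁻¹ *ᵥ x) =ᵐ[P] 0 := by
        rw [← integral_eq_zero_iff_of_nonneg hq0 hq_int, htr, ← hT]
      have : (∫ x, Real.sqrt (x ⬝ᵥ Vl⁻¹ *ᵥ x) ∂P) = 0 := by
        rw [integral_eq_zero_iff_of_nonneg (fun x => Real.sqrt_nonneg _) hsq_int]
        filter_upwards [hq_zero] with x hx
        simp only [Pi.zero_apply] at hx ⊢
        rw [hx, Real.sqrt_zero]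
      rw [this]
      exact Real.sqrt_nonneg _
    · have hsT : 0 < Real.sqrt T := Real.sqrt_pos.mpr hT
      have hbound : ∀ x : Fin D → ℝ, Real.sqrt (x ⬝ᵥ Vl⁻¹ *ᵥ x)
          ≤ (x ⬝ᵥ Vl⁻¹ *ᵥ x) / (2 * Real.sqrt T) + Real.sqrt T / 2 := by
        intro x
        have hq := hq0 x
        have hs := Real.sq_sqrt hq
        have hsT2 := Real.sq_sqrt hT0
        have h := sq_nonneg (Real.sqrt (x ⬝ᵥ Vl⁻¹ *ᵥ x) - Real.sqrt T)
        rw [div_add_div _ _ (by positivity) (two_ne_zero), le_div_iff₀ (by positivity)]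
        nlinarith [Real.sqrt_nonneg (x ⬝ᵥ Vl⁻¹ *ᵥ x), hsT]
      calc (∫ x, Real.sqrt (x ⬝ᵥ Vl⁻¹ *ᵥ x) ∂P)
          ≤ ∫ x, ((x ⬝ᵥ Vl⁻¹ *ᵥ x) / (2 * Real.sqrt T) + Real.sqrt T / 2) ∂P := by
            refine integral_mono_of_nonneg
              (Filter.Eventually.of_forall fun x => Real.sqrt_nonneg _)
              ((hq_int.div_const _).add (integrable_const _))
              (Filter.Eventually.of_forall hbound)
        _ = T / (2 * Real.sqrt T) + Real.sqrt T / 2 := by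
            rw [integral_add (hq_int.div_const _) (integrable_const _),
              integral_div, htr, integral_const]
            simp
        _ = Real.sqrt T := by
            have hsT2 := Real.sq_sqrt hT0
            field_simp
            nlinarith [hsT2]
  -- ridge decomposition
  have hVd : Vl *ᵥ (θhat - θstar) = Xᵀ *ᵥ η - l • θstar := by
    have h1 : Vl *ᵥ θhat = Xᵀ *ᵥ (X *ᵥ θstar + η) := by
      show Vl *ᵥ (Vl⁻¹ *ᵥ _) = _
      rw [Matrix.mulVec_mulVec, Matrix.mul_nonsing_inv _ hdet, Matrix.one_mulVec]
    have h2 : Vl *ᵥ θstar = Xᵀ *ᵥ (X *ᵥ θstar) + l • θstar := by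
      show (Xᵀ * X + l • 1) *ᵥ θstar = _
      rw [Matrix.add_mulVec, Matrix.smul_mulVec, Matrix.one_mulVec,
        ← Matrix.mulVec_mulVec]
    rw [Matrix.mulVec_sub, h1, h2, Matrix.mulVec_add]
    abel
  have hd : θhat - θstar = Vl⁻¹ *ᵥ (Xᵀ *ᵥ η) + -(l • (Vl⁻¹ *ᵥ θstar)) := by
    have : θhat - θstar = Vl⁻¹ *ᵥ (Vl *ᵥ (θhat - θstar)) := by
      rw [Matrix.mulVec_mulVec, Matrix.nonsing_inv_mul _ hdet, Matrix.one_mulVec]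
    rw [this, hVd, Matrix.mulVec_sub, Matrix.mulVec_smul]
    abel
  -- shrinkage : l * θᵀ V⁻¹ θ ≤ θᵀθ
  have hshrink : l * (θstar ⬝ᵥ Vl⁻¹ *ᵥ θstar) ≤ θstar ⬝ᵥ θstar := by
    set y := Vl⁻¹ *ᵥ θstar with hy
    have hθ : θstar = Xᵀ *ᵥ (X *ᵥ y) + l • y := by
      have h0 : θstar = Vl *ᵥ y := by
        rw [hy, Matrix.mulVec_mulVec, Matrix.mul_nonsing_inv _ hdet, Matrix.one_mulVec]
      rw [h0]
      show (Xᵀ * X + l • 1) *ᵥ y = _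
      rw [Matrix.add_mulVec, Matrix.smul_mulVec, Matrix.one_mulVec,
        ← Matrix.mulVec_mulVec]
    set w := X *ᵥ y with hw
    set z := Xᵀ *ᵥ w with hz
    have hzy : z ⬝ᵥ y = w ⬝ᵥ w := by
      rw [dotProduct_comm z y, hz, Matrix.dotProduct_mulVec,
        Matrix.vecMul_transpose, ← hw]
    have hθd : θstar ⬝ᵥ θstar = z ⬝ᵥ z + 2 * l * (w ⬝ᵥ w) + l * l * (y ⬝ᵥ y) := by
      rw [hθ]
      simp only [add_dotProduct, dotProduct_add, smul_dotProduct,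
        dotProduct_smul, smul_eq_mul]
      rw [dotProduct_comm y z, hzy]
      ring
    have hθy : θstar ⬝ᵥ y = w ⬝ᵥ w + l * (y ⬝ᵥ y) := by
      rw [hθ]
      simp only [add_dotProduct, smul_dotProduct, smul_eq_mul]
      rw [hzy]
    rw [hθy, hθd]
    nlinarith [dotSelf_nonneg z, dotSelf_nonneg w, dotSelf_nonneg y,
      mul_nonneg hl.le (dotSelf_nonneg w), mul_nonneg hl.le (dotSelf_nonneg y)]
  -- identity (V⁻¹ v)ᵀ V (V⁻¹ v) = vᵀ V⁻¹ v
  have hVV : ∀ v : Fin D → ℝ,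
      (Vl⁻¹ *ᵥ v) ⬝ᵥ Vl *ᵥ (Vl⁻¹ *ᵥ v) = v ⬝ᵥ Vl⁻¹ *ᵥ v := by
    intro v
    rw [Matrix.mulVec_mulVec, Matrix.mul_nonsing_inv _ hdet, Matrix.one_mulVec,
      dotProduct_comm]
  -- bound on the V-norm of the error
  have hS : Real.sqrt ((θhat - θstar) ⬝ᵥ Vl *ᵥ (θhat - θstar))
      ≤ Real.sqrt ((Xᵀ *ᵥ η) ⬝ᵥ Vl⁻¹ *ᵥ (Xᵀ *ᵥ η))
        + Real.sqrt l * Real.sqrt (θstar ⬝ᵥ θstar) := by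
    rw [hd]
    refine (psd_triangle hV.posSemidef _ _).trans ?_
    have ha : (Vl⁻¹ *ᵥ (Xᵀ *ᵥ η)) ⬝ᵥ Vl *ᵥ (Vl⁻¹ *ᵥ (Xᵀ *ᵥ η))
        = (Xᵀ *ᵥ η) ⬝ᵥ Vl⁻¹ *ᵥ (Xᵀ *ᵥ η) := hVV _
    have hb : (-(l • (Vl⁻¹ *ᵥ θstar))) ⬝ᵥ Vl *ᵥ (-(l • (Vl⁻¹ *ᵥ θstar)))
        = l * (l * (θstar ⬝ᵥ Vl⁻¹ *ᵥ θstar)) := by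
      rw [neg_dotProduct, Matrix.mulVec_neg, dotProduct_neg, neg_neg,
        smul_dotProduct, Matrix.mulVec_smul, dotProduct_smul,
        smul_eq_mul, smul_eq_mul, hVV θstar]
    rw [ha, hb]
    refine add_le_add_right ?_ _
    rw [← Real.sqrt_mul hl.le (θstar ⬝ᵥ θstar)]
    apply Real.sqrt_le_sqrt
    nlinarith [hshrink, hl]
  -- assemble
  have hpt : ∀ x : Fin D → ℝ, |x ⬝ᵥ (θhat - θstar)|
      ≤ Real.sqrt (x ⬝ᵥ Vl⁻¹ *ᵥ x)
        * Real.sqrt ((θhat - θstar) ⬝ᵥ Vl *ᵥ (θhat - θstar)) :=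
    fun x => pd_dot_le hV x _
  calc (∫ x, |x ⬝ᵥ (θhat - θstar)| ∂P)
      ≤ ∫ x, Real.sqrt (x ⬝ᵥ Vl⁻¹ *ᵥ x)
          * Real.sqrt ((θhat - θstar) ⬝ᵥ Vl *ᵥ (θhat - θstar)) ∂P := by
        exact integral_mono_of_nonneg (Filter.Eventually.of_forall fun x => abs_nonneg _)
          (hsq_int.mul_const _) (Filter.Eventually.of_forall hpt)
    _ = (∫ x, Real.sqrt (x ⬝ᵥ Vl⁻¹ *ᵥ x) ∂P)
          * Real.sqrt ((θhat - θstar) ⬝ᵥ Vl *ᵥ (θhat - θstar)) :=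
        integral_mul_const _ _
    _ ≤ Real.sqrt ((Vl⁻¹ * SigP).trace)
          * Real.sqrt ((θhat - θstar) ⬝ᵥ Vl *ᵥ (θhat - θstar)) :=
        mul_le_mul_of_nonneg_right hjen (Real.sqrt_nonneg _)
    _ ≤ _ := mul_le_mul_of_nonneg_left hS (Real.sqrt_nonneg _)
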